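/- McKean–Singer formula for the partition function of supersymmetric quantum mechanics. Let V be a finite-dimensional complex inner product space with ℤ/2-grading given by a self-adjoint linear involution ε, with even part V⁺ = ker(ε − id) and odd part V⁻ = ker(ε + id), and let Q : V → V be an odd (Q∘ε = −ε∘Q) self-adjoint operator. Then for every real number t, sTr(exp(−t·Q²)) = dim(ker Q ∩ V⁺) − dim(ker Q ∩ V⁻). In particular the partition function Z(t) = sTr(e^{−tQ²}) is independent of t and equals the index of Q. -/

import Mathlib

open Module

section Aux

variable {U : Type*} [AddCommGroup U] [Module ℂ U] [FiniteDimensional ℂ U]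

lemma trace_involution (f : U →ₗ[ℂ] U) (hf : f * f = 1) :
    LinearMap.trace ℂ U f
      = (finrank ℂ (LinearMap.ker (f - 1)) : ℂ)
        - (finrank ℂ (LinearMap.ker (f + 1)) : ℂ) := by
  have hff : ∀ x, f (f x) = x := by
    intro x
    have := LinearMap.ext_iff.mp hf x
    simpa [Module.End.mul_apply] using this
  have hP : LinearMap.IsProj (LinearMap.ker (f - 1)) ((2⁻¹ : ℂ) • (1 + f)) := by
    constructor
    · intro x
      rw [LinearMap.mem_ker, LinearMap.sub_apply, Module.End.one_apply, LinearMap.smul_apply,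
        LinearMap.add_apply, Module.End.one_apply, map_smul, map_add, hff, add_comm (f x) x,
        sub_self]
    · intro x hx
      have hfx : f x = x := by
        have := LinearMap.mem_ker.mp hx
        simpa [LinearMap.sub_apply, sub_eq_zero] using this
      simp only [LinearMap.smul_apply, LinearMap.add_apply, Module.End.one_apply, hfx]
      rw [← two_smul ℂ x, smul_smul]
      norm_num
  have hN : LinearMap.IsProj (LinearMap.ker (f + 1)) ((2⁻¹ : ℂ) • (1 - f)) := by
    constructor
    · intro x
      rw [LinearMap.mem_ker, LinearMap.add_apply, Module.End.one_apply, LinearMap.smul_apply,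
        LinearMap.sub_apply, Module.End.one_apply, map_smul, map_sub, hff, ← smul_add,
        show f x - x + (x - f x) = 0 by abel, smul_zero]
    · intro x hx
      have hfx : f x = -x := by
        have := LinearMap.mem_ker.mp hx
        rw [LinearMap.add_apply, Module.End.one_apply, add_eq_zero_iff_eq_neg] at this
        exact this
      simp only [LinearMap.smul_apply, LinearMap.sub_apply, Module.End.one_apply, hfx,
        sub_neg_eq_add]
      rw [← two_smul ℂ x, smul_smul]
      norm_num
  have hsplit : f = (2⁻¹ : ℂ) • (1 + f) - (2⁻¹ : ℂ) • (1 - f) := by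
    ext x
    simp only [LinearMap.sub_apply, LinearMap.smul_apply, LinearMap.add_apply,
      Module.End.one_apply, ← smul_sub]
    rw [show x + f x - (x - f x) = (2 : ℂ) • f x by rw [two_smul]; abel, smul_smul]
    norm_num
  conv_lhs => rw [hsplit]
  rw [map_sub, hP.trace, hN.trace]

end Aux

set_option maxHeartbeats 1000000 in
/-- **McKean–Singer formula for the partition function of supersymmetric quantum mechanics.**
Let `V` be a finite-dimensional complex inner product space with `ℤ/2`-grading given by a
self-adjoint linear involution `ε` (even part `V⁺ = ker (ε − 1)`, odd part `V⁻ = ker (ε + 1)`),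
and let `Q` be an odd (`Q∘ε = −ε∘Q`) self-adjoint operator. Then for every real `t`,
`sTr (exp (−t·Q²)) = dim (ker Q ∩ V⁺) − dim (ker Q ∩ V⁻)`. -/
theorem mckean_singer
    {V : Type*} [NormedAddCommGroup V] [InnerProductSpace ℂ V] [FiniteDimensional ℂ V]
    (ε Q : V →L[ℂ] V)
    (hε_sa : IsSelfAdjoint ε) (hε2 : ε * ε = 1)
    (hQ_sa : IsSelfAdjoint Q) (hodd : Q * ε = -(ε * Q))
    (t : ℝ) :
    LinearMap.trace ℂ V ((ε * NormedSpace.exp ((-(t : ℂ)) • Q ^ 2)).toLinearMap)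
      = (((finrank ℂ ↥(LinearMap.ker (Q : V →ₗ[ℂ] V) ⊓ LinearMap.ker ((ε - 1 : V →L[ℂ] V) : V →ₗ[ℂ] V)) : ℤ)
          - (finrank ℂ ↥(LinearMap.ker (Q : V →ₗ[ℂ] V) ⊓ LinearMap.ker ((ε + 1 : V →L[ℂ] V) : V →ₗ[ℂ] V)) : ℤ) : ℤ) : ℂ) := by
  classical
  -- Q² commutes with ε
  have hQε2 : Q ^ 2 * ε = ε * Q ^ 2 := by
    have h1 : Q ^ 2 * ε = Q * (Q * ε) := by rw [sq, mul_assoc]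
    rw [h1, hodd, mul_neg, ← mul_assoc, hodd, neg_mul, neg_neg, mul_assoc, ← sq]
  -- odd powers of Q anticommute with ε
  have hanti : ∀ k : ℕ, Q ^ (2 * k + 1) * ε = -(ε * Q ^ (2 * k + 1)) := by
    intro k
    induction k with
    | zero => simpa using hodd
    | succ n ih =>
      have hexp : 2 * (n + 1) + 1 = 2 + (2 * n + 1) := by omega
      rw [hexp, pow_add, mul_assoc, ih, mul_neg, ← mul_assoc, hQε2, mul_assoc]
  -- cyclicity of the (continuous-linear-map) trace
  have τcomm : ∀ A B : V →L[ℂ] V,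
      LinearMap.trace ℂ V ((A * B).toLinearMap) = LinearMap.trace ℂ V ((B * A).toLinearMap) := by
    intro A B
    have := LinearMap.trace_mul_comm ℂ A.toLinearMap B.toLinearMap
    simpa [ContinuousLinearMap.mul_def, ContinuousLinearMap.coe_comp,
      Module.End.mul_eq_comp] using this
  -- the supertrace of positive even powers vanishes
  have hzero : ∀ n : ℕ, n ≠ 0 → LinearMap.trace ℂ V ((ε * Q ^ (2 * n)).toLinearMap) = 0 := by
    intro n hn
    obtain ⟨k, rfl⟩ : ∃ k, n = k + 1 := ⟨n - 1, by omega⟩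
    have hsplit : ε * Q ^ (2 * (k + 1)) = (ε * Q) * Q ^ (2 * k + 1) := by
      rw [show 2 * (k + 1) = 1 + (2 * k + 1) by omega, pow_add, pow_one, mul_assoc]
    have hneg : Q ^ (2 * k + 1) * (ε * Q) = -(ε * Q ^ (2 * (k + 1))) := by
      rw [← mul_assoc, hanti k, neg_mul, mul_assoc,
        show Q ^ (2 * k + 1) * Q = Q ^ (2 * (k + 1)) by
          rw [← pow_succ]; ring_nf]
    have h1 := τcomm (ε * Q) (Q ^ (2 * k + 1))
    rw [← hsplit, hneg] at h1
    have h2 : LinearMap.trace ℂ V ((-(ε * Q ^ (2 * (k + 1)))).toLinearMap)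
        = -LinearMap.trace ℂ V ((ε * Q ^ (2 * (k + 1))).toLinearMap) := by
      simp
    rw [h2] at h1
    have h3 : LinearMap.trace ℂ V ((ε * Q ^ (2 * (k + 1))).toLinearMap)
        + LinearMap.trace ℂ V ((ε * Q ^ (2 * (k + 1))).toLinearMap) = 0 := by
      nth_rewrite 2 [h1]
      ring
    exact add_self_eq_zero.mp h3
  -- Part A: the supertrace of the heat operator equals the trace of ε
  have hA : LinearMap.trace ℂ V ((ε * NormedSpace.exp ((-(t : ℂ)) • Q ^ 2)).toLinearMap)
      = LinearMap.trace ℂ V ε.toLinearMap := by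
    set A : V →L[ℂ] V := (-(t : ℂ)) • Q ^ 2 with hAdef
    let L : (V →L[ℂ] V) →ₗ[ℂ] ℂ :=
      (LinearMap.trace ℂ V) ∘ₗ (ContinuousLinearMap.coeLM ℂ) ∘ₗ (LinearMap.mulLeft ℂ ε)
    have hL : ∀ T : V →L[ℂ] V, L T = LinearMap.trace ℂ V ((ε * T).toLinearMap) := fun T => rfl
    let φ : (V →L[ℂ] V) →L[ℂ] ℂ := LinearMap.toContinuousLinearMap L
    have hφ : ∀ T, φ T = L T := fun T => rfl
    have hsum : Summable (fun n : ℕ => (n.factorial : ℂ)⁻¹ • A ^ n) :=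
      NormedSpace.expSeries_summable' A
    have hexp : NormedSpace.exp A = ∑' n : ℕ, (n.factorial : ℂ)⁻¹ • A ^ n := by
      rw [NormedSpace.exp_eq_tsum (𝕂 := ℂ)]
    rw [← hL, ← hφ, hexp, φ.map_tsum hsum]
    have hterm : ∀ n : ℕ, n ≠ 0 → φ ((n.factorial : ℂ)⁻¹ • A ^ n) = 0 := by
      intro n hn
      have hAn : A ^ n = ((-(t : ℂ)) ^ n) • Q ^ (2 * n) := by
        rw [hAdef, smul_pow, ← pow_mul]
      rw [hφ, hL, hAn, smul_smul, mul_smul_comm]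
      have : ((ε * Q ^ (2 * n)) : V →L[ℂ] V).toLinearMap = (ε * Q ^ (2 * n)).toLinearMap := rfl
      rw [ContinuousLinearMap.coe_smul, map_smul, hzero n hn, smul_zero]
    rw [tsum_eq_single 0 hterm, hφ, hL]
    simp
  rw [hA]
  -- Part B: trace of ε equals the index
  set K : Submodule ℂ V := LinearMap.ker (Q : V →ₗ[ℂ] V) with hK
  have hKε : ∀ x ∈ K, ε x ∈ K := by
    intro x hx
    have hx' : Q x = 0 := LinearMap.mem_ker.mp hx
    have := congrArg (fun T : V →L[ℂ] V => T x) hodd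
    simp only [ContinuousLinearMap.mul_apply, ContinuousLinearMap.neg_apply] at this
    rw [hx', map_zero, neg_zero] at this
    exact LinearMap.mem_ker.mpr this
  have hKQ : ∀ x ∈ K, Q x ∈ K := by
    intro x hx
    rw [show Q x = 0 from LinearMap.mem_ker.mp hx]
    exact K.zero_mem
  set W : Submodule ℂ V := Kᗮ with hW
  have hWε : ∀ x ∈ W, ε x ∈ W := by
    intro x hx
    rw [Submodule.mem_orthogonal] at hx ⊢
    intro u hu
    have h1 : inner ℂ u (ε x) = (inner ℂ (ε u) x : ℂ) := (hε_sa.isSymmetric u x).symm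
    rw [h1]
    exact hx (ε u) (hKε u hu)
  have hWQ : ∀ x ∈ W, Q x ∈ W := by
    intro x hx
    rw [Submodule.mem_orthogonal] at hx ⊢
    intro u hu
    have h1 : inner ℂ u (Q x) = (inner ℂ (Q u) x : ℂ) := (hQ_sa.isSymmetric u x).symm
    rw [h1]
    exact hx (Q u) (hKQ u hu)
  have hcompl : IsCompl K W := K.isCompl_orthogonal
  set N : Bool → Submodule ℂ V := fun b => bif b then K else W with hN
  have hInternal : DirectSum.IsInternal N := by
    rw [DirectSum.isInternal_submodule_iff_isCompl N (i := true) (j := false)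
      (by simp) (by ext b; cases b <;> simp)]
    exact hcompl
  have hmapsTo : ∀ b : Bool, Set.MapsTo ε.toLinearMap (N b) (N b) := by
    intro b
    cases b
    · exact fun x hx => hWε x hx
    · exact fun x hx => hKε x hx
  have htr := LinearMap.trace_eq_sum_trace_restrict hInternal hmapsTo
  rw [Fintype.sum_bool] at htr
  -- trace on W is zero
  have hWQ' : ∀ x ∈ W, Q.toLinearMap x ∈ W := hWQ
  set qW : W →ₗ[ℂ] W := Q.toLinearMap.restrict hWQ' with hqW
  set eW : W →ₗ[ℂ] W := ε.toLinearMap.restrict (hmapsTo false) with heW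
  have hqW_inj : Function.Injective qW := by
    intro x y hxy
    have h1 : Q (x : V) = Q (y : V) := congrArg Subtype.val hxy
    have h2 : (x : V) - (y : V) ∈ K := LinearMap.mem_ker.mpr (by rw [map_sub]; exact sub_eq_zero.mpr h1)
    have h3 : (x : V) - (y : V) ∈ W := W.sub_mem x.2 y.2
    have h4 : (x : V) - (y : V) = 0 :=
      (Submodule.mem_bot ℂ).mp (hcompl.inf_eq_bot ▸ Submodule.mem_inf.mpr ⟨h2, h3⟩)
    exact Subtype.ext (sub_eq_zero.mp h4)
  have hqW_bij : Function.Bijective qW :=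
    ⟨hqW_inj, (LinearMap.injective_iff_surjective).mp hqW_inj⟩
  set g : W ≃ₗ[ℂ] W := LinearEquiv.ofBijective qW hqW_bij with hg
  have hrel : ∀ y : W, qW (eW y) = -(eW (qW y)) := by
    intro y
    apply Subtype.ext
    have := congrArg (fun T : V →L[ℂ] V => T (y : V)) hodd
    simp only [ContinuousLinearMap.mul_apply, ContinuousLinearMap.neg_apply] at this
    exact this
  have hconj : g.conj eW = -eW := by
    ext x
    obtain ⟨y, rfl⟩ := hqW_bij.2 x
    have hgy : g y = qW y := rfl
    rw [← hgy, LinearEquiv.conj_apply]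
    simp only [LinearMap.coe_comp, Function.comp_apply, LinearEquiv.coe_coe,
      LinearEquiv.symm_apply_apply, LinearMap.neg_apply]
    rw [hgy, ← hrel y]
    rfl
  have htrW : LinearMap.trace ℂ W eW = 0 := by
    have h1 := LinearMap.trace_conj' eW g
    rw [hconj, map_neg] at h1
    exact add_self_eq_zero.mp (by linear_combination -h1)
  -- trace on K is the index
  set eK : K →ₗ[ℂ] K := ε.toLinearMap.restrict (hmapsTo true) with heK
  have hK2 : eK * eK = 1 := by
    ext x
    have := congrArg (fun T : V →L[ℂ] V => T (x : V)) hε2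
    simp only [ContinuousLinearMap.mul_apply, ContinuousLinearMap.one_apply] at this
    exact this
  have htrK := trace_involution eK hK2
  -- identify the kernels
  have hplus : Submodule.map K.subtype (LinearMap.ker (eK - 1))
      = K ⊓ LinearMap.ker ((ε - 1 : V →L[ℂ] V) : V →ₗ[ℂ] V) := by
    ext x
    simp only [Submodule.mem_map, LinearMap.mem_ker, Submodule.mem_inf]
    constructor
    · rintro ⟨y, hy, rfl⟩
      refine ⟨y.2, ?_⟩
      have : ε (y : V) - (y : V) = 0 := by
        have := congrArg Subtype.val hy
        exact this
      simpa [ContinuousLinearMap.sub_apply] using this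
    · rintro ⟨hxQ, hxε⟩
      refine ⟨⟨x, hxQ⟩, ?_, rfl⟩
      apply Subtype.ext
      have : ε x - x = 0 := by simpa [ContinuousLinearMap.sub_apply] using hxε
      exact this
  have hminus : Submodule.map K.subtype (LinearMap.ker (eK + 1))
      = K ⊓ LinearMap.ker ((ε + 1 : V →L[ℂ] V) : V →ₗ[ℂ] V) := by
    ext x
    simp only [Submodule.mem_map, LinearMap.mem_ker, Submodule.mem_inf]
    constructor
    · rintro ⟨y, hy, rfl⟩
      refine ⟨y.2, ?_⟩
      have : ε (y : V) + (y : V) = 0 := by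
        have := congrArg Subtype.val hy
        exact this
      simpa [ContinuousLinearMap.add_apply] using this
    · rintro ⟨hxQ, hxε⟩
      refine ⟨⟨x, hxQ⟩, ?_, rfl⟩
      apply Subtype.ext
      have : ε x + x = 0 := by simpa [ContinuousLinearMap.add_apply] using hxε
      exact this
  have hfrp : finrank ℂ (LinearMap.ker (eK - 1))
      = finrank ℂ ↥(K ⊓ LinearMap.ker ((ε - 1 : V →L[ℂ] V) : V →ₗ[ℂ] V)) := by
    rw [← hplus]
    exact (Submodule.equivMapOfInjective K.subtype K.injective_subtype _).finrank_eq
  have hfrm : finrank ℂ (LinearMap.ker (eK + 1))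
      = finrank ℂ ↥(K ⊓ LinearMap.ker ((ε + 1 : V →L[ℂ] V) : V →ₗ[ℂ] V)) := by
    rw [← hminus]
    exact (Submodule.equivMapOfInjective K.subtype K.injective_subtype _).finrank_eq
  rw [htr]
  have htr2 : (LinearMap.trace ℂ ↥(N true)) eK + (LinearMap.trace ℂ ↥(N false)) eW
      = (LinearMap.trace ℂ ↥K) eK + (LinearMap.trace ℂ ↥W) eW := rfl
  rw [htr2, htrW, htrK, hfrp, hfrm]
  push_cast
  ring
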